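/- Let m, n be positive integers and x₀ a real number with |x₀| ≥ 2cos(π/(4m+2)). Define, for real y, t(y) = x₀² - y - (y-2)(y+2-x₀²)·S_m(y)·S_{m-1}(y) and μ(y) = 1 + (y+2-x₀²)·S_{m-1}(y)·(S_m(y) - S_{m-1}(y)), and f(y) = S_n(t(y)) - μ(y)·S_{n-1}(t(y)). Then f has at least n distinct real roots. -/

import Mathlib

open Real

/-- Chebyshev polynomials of the second kind, nonnegative indices. -/
noncomputable def Snat (z : ℝ) : ℕ → ℝ
  | 0 => 1
  | 1 => z
  | (n+2) => z * Snat z (n+1) - Snat z n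

/-- Chebyshev polynomials of the second kind, extended to all integer indices
by the recursion `S k = z * S (k-1) - S (k-2)` (so `S (-1) = 0`, `S (-k-2) = -S k`). -/
noncomputable def S (k : ℤ) (z : ℝ) : ℝ :=
  if 0 ≤ k then Snat z k.toNat
  else if k = -1 then 0 else -Snat z (-k - 2).toNat

set_option maxHeartbeats 1000000


lemma snat_cont (k : ℕ) : Continuous fun z : ℝ => Snat z k := by
  induction k using Nat.twoStepInduction with
  | zero => simpa [Snat] using continuous_const
  | one => simpa [Snat] using continuous_id'
  | more k ih1 ih2 =>
    have e : (fun z : ℝ => Snat z (k+2)) = fun z : ℝ => z * Snat z (k+1) - Snat z k := by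
      funext z; rfl
    rw [e]; exact (continuous_id.mul ih2).sub ih1

lemma snat_two (k : ℕ) : Snat 2 k = (k : ℝ) + 1 := by
  induction k using Nat.twoStepInduction with
  | zero => simp [Snat]
  | one => simp [Snat]; norm_num
  | more k ih1 ih2 =>
    have e : Snat 2 (k+2) = 2 * Snat 2 (k+1) - Snat 2 k := rfl
    rw [e, ih1, ih2]; push_cast; ring

lemma snat_neg_two (k : ℕ) : Snat (-2) k = (-1)^k * ((k : ℝ) + 1) := by
  induction k using Nat.twoStepInduction with
  | zero => simp [Snat]
  | one => simp [Snat]; norm_num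
  | more k ih1 ih2 =>
    have e : Snat (-2) (k+2) = (-2) * Snat (-2) (k+1) - Snat (-2) k := rfl
    rw [e, ih1, ih2]; push_cast; ring

lemma sin_mul_snat (θ : ℝ) (k : ℕ) :
    Real.sin θ * Snat (2 * Real.cos θ) k = Real.sin (((k : ℝ) + 1) * θ) := by
  induction k using Nat.twoStepInduction with
  | zero => simp [Snat]
  | one =>
    have h : ((1:ℕ):ℝ) + 1 = 2 := by norm_num
    rw [h, Real.sin_two_mul]; simp [Snat]; ring
  | more k ih1 ih2 =>
    have e : Snat (2*Real.cos θ) (k+2)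
        = (2*Real.cos θ) * Snat (2*Real.cos θ) (k+1) - Snat (2*Real.cos θ) k := rfl
    have key : Real.sin ((((k:ℝ)+2)+1)*θ)
        = 2*Real.cos θ * Real.sin (((k:ℝ)+2)*θ) - Real.sin (((k:ℝ)+1)*θ) := by
      have h1 := Real.sin_add (((k:ℝ)+2)*θ) θ
      have h2 := Real.sin_sub (((k:ℝ)+2)*θ) θ
      rw [show (((k:ℝ)+2)+1)*θ = ((k:ℝ)+2)*θ + θ from by ring,
          show ((k:ℝ)+1)*θ = ((k:ℝ)+2)*θ - θ from by ring, h1, h2]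
      ring
    push_cast at ih1 ih2 ⊢
    rw [e]
    rw [show ((k:ℝ)+2+1)*θ = (((k:ℝ)+2)+1)*θ from by ring, key,
        show ((k:ℝ)+1+1)*θ = ((k:ℝ)+2)*θ from by ring] at *
    linear_combination (2*Real.cos θ) * ih2 - ih1

lemma snat_mono {y : ℝ} (hy : 2 ≤ y) (k : ℕ) :
    1 ≤ Snat y k ∧ Snat y k ≤ Snat y (k+1) := by
  induction k with
  | zero => refine ⟨le_refl _, ?_⟩; simp [Snat]; linarith
  | succ k ih =>
    obtain ⟨h1, h2⟩ := ih
    have e : Snat y (k+2) = y * Snat y (k+1) - Snat y k := rfl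
    refine ⟨by linarith, ?_⟩
    rw [e]
    nlinarith [mul_nonneg (by linarith : (0:ℝ) ≤ y - 2) (by linarith : (0:ℝ) ≤ Snat y (k+1))]

lemma alt_roots (g : ℝ → ℝ) (hg : Continuous g) (n : ℕ) (b : ℕ → ℝ)
    (hb : ∀ k, k < n → b k < b (k+1))
    (hs : ∀ k, k ≤ n → 0 < (-1:ℝ)^k * g (b k)) :
    ∃ Y : Finset ℝ, n ≤ Y.card ∧ ∀ y ∈ Y, g y = 0 := by
  have hmono : ∀ j, j ≤ n → ∀ i, i ≤ j → b i ≤ b j := by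
    intro j
    induction j with
    | zero =>
      intro _ i hi
      have : i = 0 := Nat.le_zero.mp hi
      simp [this]
    | succ j ih =>
      intro hjn i hi
      rcases Nat.lt_or_ge i (j+1) with h | h
      on_goal 2 => have h : i = j + 1 := by omega
      · exact le_trans (ih (by omega) i (by omega)) (le_of_lt (hb j (by omega)))
      · simp [h]
  have hgne : ∀ k, k ≤ n → g (b k) ≠ 0 := by
    intro k hk h0
    have := hs k hk
    rw [h0] at this; simp at this
  have hex : ∀ k : Fin n, ∃ c, c ∈ Set.Ioo (b (k : ℕ)) (b ((k : ℕ)+1)) ∧ g c = 0 := by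
    rintro ⟨k, hk⟩
    simp only
    have h1 := hs k (le_of_lt hk)
    have h2 := hs (k+1) hk
    have hlt := hb k hk
    have h0 : (0:ℝ) ∈ Set.uIcc (g (b k)) (g (b (k+1))) := by
      rw [Set.mem_uIcc]
      rcases Nat.even_or_odd k with he | ho
      · have e1 : (-1:ℝ)^k = 1 := he.neg_one_pow
        have e2 : (-1:ℝ)^(k+1) = -1 := by rw [pow_succ, e1]; ring
        rw [e1] at h1; rw [e2] at h2
        right; constructor <;> linarith
      · have e1 : (-1:ℝ)^k = -1 := ho.neg_one_pow
        have e2 : (-1:ℝ)^(k+1) = 1 := by rw [pow_succ, e1]; ring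
        rw [e1] at h1; rw [e2] at h2
        left; constructor <;> linarith
    obtain ⟨c, hc, hgc⟩ := intermediate_value_uIcc (hg.continuousOn) h0
    rw [Set.uIcc_of_le (le_of_lt hlt)] at hc
    refine ⟨c, ⟨?_, ?_⟩, hgc⟩
    · rcases lt_or_eq_of_le hc.1 with h | h
      · exact h
      · exact absurd (h ▸ hgc) (hgne k (le_of_lt hk))
    · rcases lt_or_eq_of_le hc.2 with h | h
      · exact h
      · rw [h] at hgc; exact absurd hgc (hgne (k+1) hk)
  choose c hc1 hc2 using hex
  have hinj : Function.Injective c := by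
    have hsm : ∀ i j : Fin n, i < j → c i < c j := by
      intro i j hij
      calc c i < b ((i:ℕ)+1) := (hc1 i).2
        _ ≤ b (j : ℕ) := hmono j (le_of_lt j.isLt) _ (by exact_mod_cast hij)
        _ < c j := (hc1 j).1
    intro i j hij
    rcases lt_trichotomy i j with h | h | h
    · exact absurd hij (ne_of_lt (hsm i j h))
    · exact h
    · exact absurd hij.symm (ne_of_lt (hsm j i h))
  refine ⟨Finset.image c Finset.univ, ?_, ?_⟩
  · rw [Finset.card_image_of_injective _ hinj, Finset.card_univ, Fintype.card_fin]
  · intro y hy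
    obtain ⟨k, _, rfl⟩ := Finset.mem_image.mp hy
    exact hc2 k

theorem J2m1_neg2n_real_roots (m n : ℕ) (hm : 1 ≤ m) (hn : 1 ≤ n) (x₀ : ℝ)
    (hx : 2 * Real.cos (Real.pi / (4 * m + 2)) ≤ |x₀|)
    (t mu f : ℝ → ℝ)
    (ht : ∀ y, t y = x₀ ^ 2 - y - (y - 2) * (y + 2 - x₀ ^ 2) * S m y * S ((m : ℤ) - 1) y)
    (hmu : ∀ y, mu y = 1 + (y + 2 - x₀ ^ 2) * S ((m : ℤ) - 1) y * (S m y - S ((m : ℤ) - 1) y))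
    (hf : ∀ y, f y = S n (t y) - mu y * S ((n : ℤ) - 1) (t y)) :
    ∃ Y : Finset ℝ, n ≤ Y.card ∧ ∀ y ∈ Y, f y = 0 := by
  obtain ⟨m', rfl⟩ : ∃ m', m = m' + 1 := ⟨m - 1, (Nat.succ_pred_eq_of_pos hm).symm⟩
  obtain ⟨n', rfl⟩ : ∃ n', n = n' + 1 := ⟨n - 1, (Nat.succ_pred_eq_of_pos hn).symm⟩
  -- convert S to Snat
  have hS1 : ∀ (j : ℕ) (y : ℝ), S (j : ℤ) y = Snat y j := by intro j y; simp [S]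
  have hSm1 : ∀ y : ℝ, S (((m'+1 : ℕ) : ℤ) - 1) y = Snat y m' := by
    intro y
    rw [show (((m'+1 : ℕ) : ℤ) - 1) = ((m' : ℕ) : ℤ) from by push_cast; ring, hS1]
  have hSn1 : ∀ y : ℝ, S (((n'+1 : ℕ) : ℤ) - 1) y = Snat y n' := by
    intro y
    rw [show (((n'+1 : ℕ) : ℤ) - 1) = ((n' : ℕ) : ℤ) from by push_cast; ring, hS1]
  simp only [hS1, hSm1, hSn1] at ht hmu hf
  -- x₀ ≠ 0
  have hx0 : 0 < x₀ ^ 2 := by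
    have hpi := Real.pi_pos
    have hden : (0:ℝ) < 4 * ((m'+1 : ℕ) : ℝ) + 2 := by positivity
    have h1 : π / (4 * ((m'+1 : ℕ) : ℝ) + 2) < π / 2 := by
      apply div_lt_div_of_pos_left hpi (by norm_num)
      have : (1:ℝ) ≤ ((m'+1 : ℕ) : ℝ) := by exact_mod_cast Nat.one_le_iff_ne_zero.mpr (by omega)
      linarith
    have h2 : 0 < π / (4 * ((m'+1 : ℕ) : ℝ) + 2) := by positivity
    have hcos : 0 < Real.cos (π / (4 * ((m'+1 : ℕ) : ℝ) + 2)) :=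
      Real.cos_pos_of_mem_Ioo ⟨by linarith, h1⟩
    have habs : 0 < |x₀| := by linarith
    have hne : x₀ ≠ 0 := abs_pos.mp habs
    positivity
  -- continuity
  have tc : Continuous t := by
    have e : t = fun y => x₀^2 - y - (y-2)*(y+2-x₀^2)*Snat y (m'+1)*Snat y m' := funext ht
    rw [e]
    exact (continuous_const.sub continuous_id).sub
      ((((continuous_id.sub continuous_const).mul
        ((continuous_id.add continuous_const).sub continuous_const)).mul
        (snat_cont (m'+1))).mul (snat_cont m'))
  have muc : Continuous mu := by
    have e : mu = fun y => 1 + (y+2-x₀^2)*Snat y m'*(Snat y (m'+1) - Snat y m') := funext hmu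
    rw [e]
    exact continuous_const.add
      ((((continuous_id.add continuous_const).sub continuous_const).mul (snat_cont m')).mul
        ((snat_cont (m'+1)).sub (snat_cont m')))
  have fc : Continuous f := by
    have e : f = fun y => Snat (t y) (n'+1) - mu y * Snat (t y) n' := funext hf
    rw [e]
    exact ((snat_cont (n'+1)).comp tc).sub (muc.mul ((snat_cont n').comp tc))
  -- key points
  set ystar : ℝ := x₀^2 - 2 with hystar
  set Y0 : ℝ := max 4 (x₀^2 + 1) with hY0def
  have h4Y : (4:ℝ) ≤ Y0 := le_max_left _ _
  have hxY : x₀^2 + 1 ≤ Y0 := le_max_right _ _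
  have hyY : ystar ≤ Y0 := by simp only [hystar]; linarith
  have hty : t ystar = 2 := by rw [ht]; simp only [hystar]; ring
  have hmuy : mu ystar = 1 := by rw [hmu]; simp only [hystar]; ring
  have htY0 : t Y0 ≤ -2 := by
    have hs1 : 1 ≤ Snat Y0 (m'+1) := (snat_mono (by linarith) _).1
    have hs2 : 1 ≤ Snat Y0 m' := (snat_mono (by linarith) _).1
    have p1 : (2:ℝ) ≤ Y0 - 2 := by linarith
    have p2 : (3:ℝ) ≤ Y0 + 2 - x₀^2 := by linarith
    have q1 : 6 ≤ (Y0-2)*(Y0+2-x₀^2) := by nlinarith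
    have q2 : 6 ≤ (Y0-2)*(Y0+2-x₀^2)*Snat Y0 (m'+1) := by nlinarith
    have q3 : 6 ≤ (Y0-2)*(Y0+2-x₀^2)*Snat Y0 (m'+1)*Snat Y0 m' := by nlinarith
    rw [ht]; linarith
  have ht2 : t 2 = x₀^2 - 2 := by rw [ht]; ring
  -- the comparison values
  set v : ℕ → ℝ := fun k => 2 * Real.cos ((k : ℝ) * π / ((n' : ℝ) + 1)) with hv
  have hv0 : v 0 = 2 := by simp [hv]
  have hvlast : v (n'+1) = -2 := by
    have : ((n'+1 : ℕ) : ℝ) * π / ((n' : ℝ) + 1) = π := by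
      push_cast
      field_simp
    simp only [hv, this, Real.cos_pi]; ring
  have hvmono : ∀ k l, k < l → l ≤ n'+1 → v l < v k := by
    intro k l hkl hln
    have hpi := Real.pi_pos
    have hd : (0:ℝ) < (n' : ℝ) + 1 := by positivity
    have h1 : 0 ≤ (k:ℝ)*π/((n':ℝ)+1) := by positivity
    have h2 : (l:ℝ)*π/((n':ℝ)+1) ≤ π := by
      rw [div_le_iff₀ hd]
      have : (l:ℝ) ≤ (n':ℝ)+1 := by exact_mod_cast hln
      nlinarith
    have h3 : (k:ℝ)*π/((n':ℝ)+1) < (l:ℝ)*π/((n':ℝ)+1) := by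
      apply div_lt_div_of_pos_right ?_ hd
      have : (k:ℝ) < (l:ℝ) := by exact_mod_cast hkl
      nlinarith
    have := Real.cos_lt_cos_of_nonneg_of_le_pi h1 h2 h3
    simp only [hv]; linarith
  have hvle2 : ∀ k, v k ≤ 2 := by
    intro k
    have := Real.cos_le_one ((k:ℝ)*π/((n':ℝ)+1))
    simp only [hv]; linarith
  have hvgem2 : ∀ k, -2 ≤ v k := by
    intro k
    have := Real.neg_one_le_cos ((k:ℝ)*π/((n':ℝ)+1))
    simp only [hv]; linarith
  -- Chebyshev values at v k for 1 ≤ k ≤ n'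
  have hsnat_v : ∀ k, 1 ≤ k → k ≤ n' → Snat (v k) n' = 0 ∧ Snat (v k) (n'+1) = (-1:ℝ)^k := by
    intro k h1 h2
    have hpi := Real.pi_pos
    set θ : ℝ := (k:ℝ)*π/((n':ℝ)+1) with hθ
    have hd : (0:ℝ) < (n' : ℝ) + 1 := by positivity
    have hθpos : 0 < θ := by
      have : (1:ℝ) ≤ (k:ℝ) := by exact_mod_cast h1
      rw [hθ]; positivity
    have hθlt : θ < π := by
      rw [hθ, div_lt_iff₀ hd]
      have : (k:ℝ) ≤ (n':ℝ) := by exact_mod_cast h2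
      nlinarith
    have hsθ : 0 < Real.sin θ := Real.sin_pos_of_pos_of_lt_pi hθpos hθlt
    have e1 := sin_mul_snat θ n'
    have e2 := sin_mul_snat θ (n'+1)
    have arg1 : ((n':ℝ)+1)*θ = (k:ℝ)*π := by
      rw [hθ]; field_simp
    have arg2 : (((n'+1:ℕ):ℝ)+1)*θ = θ + (k:ℝ)*π := by
      push_cast
      rw [hθ]; field_simp; ring
    rw [arg1, Real.sin_nat_mul_pi] at e1
    rw [arg2, Real.sin_add_nat_mul_pi] at e2
    have hvk : v k = 2 * Real.cos θ := by simp only [hv, hθ]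
    constructor
    · rw [hvk]
      exact mul_left_cancel₀ (ne_of_gt hsθ) (by rw [e1]; ring)
    · rw [hvk]
      apply mul_left_cancel₀ (ne_of_gt hsθ)
      rw [e2]; ring
  -- the sets
  set C : ℕ → Set ℝ := fun k => Set.Icc ystar Y0 ∩ t ⁻¹' {v k} with hC
  have hCclosed : ∀ k, IsClosed (C k) :=
    fun k => isClosed_Icc.inter (isClosed_singleton.preimage tc)
  have hCbdd : ∀ k, BddBelow (C k) :=
    fun k => (BddBelow.mono Set.inter_subset_left bddBelow_Icc)
  have hCne : ∀ k, k ≤ n' → (C k).Nonempty := by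
    intro k hk
    have hmem : v k ∈ Set.Icc (t Y0) (t ystar) := by
      rw [hty]; exact ⟨by linarith [hvgem2 k, htY0], hvle2 k⟩
    obtain ⟨p, hp, hpt⟩ := intermediate_value_Icc' hyY tc.continuousOn hmem
    exact ⟨p, hp, by simp [hpt]⟩
  have hCmem : ∀ k, k ≤ n' → sInf (C k) ∈ C k := fun k hk =>
    (hCclosed k).csInf_mem (hCne k hk) (hCbdd k)
  set M : ℝ := max 2 (sInf (C n')) with hM
  have hMY : M ≤ Y0 := by
    rcases max_cases 2 (sInf (C n')) with ⟨h, _⟩ | ⟨h, _⟩ <;> rw [hM, h]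
    · linarith
    · exact ((hCmem n' le_rfl).1).2
  have hMt : -2 < t M := by
    rcases max_cases 2 (sInf (C n')) with ⟨h, _⟩ | ⟨h, _⟩ <;> rw [hM, h]
    · rw [ht2]; linarith
    · have h2 : t (sInf (C n')) = v n' := by
        have := (hCmem n' le_rfl).2; simpa using this
      rw [h2]
      have := hvmono n' (n'+1) (by omega) le_rfl
      rw [hvlast] at this; linarith
  set D : Set ℝ := Set.Icc M Y0 ∩ t ⁻¹' {-2} with hD
  have hDne : D.Nonempty := by
    have hmem : (-2:ℝ) ∈ Set.Icc (t Y0) (t M) := ⟨htY0, le_of_lt hMt⟩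
    obtain ⟨p, hp, hpt⟩ := intermediate_value_Icc' hMY tc.continuousOn hmem
    exact ⟨p, hp, by simp [hpt]⟩
  have hDmem : sInf D ∈ D :=
    (isClosed_Icc.inter (isClosed_singleton.preimage tc)).csInf_mem hDne
      (BddBelow.mono Set.inter_subset_left bddBelow_Icc)
  have htD : t (sInf D) = -2 := by have := hDmem.2; simpa using this
  set b : ℕ → ℝ := fun k => if k = n'+1 then sInf D else sInf (C k) with hb
  have hbmid : ∀ k, k ≤ n' → b k = sInf (C k) := by
    intro k hk; simp only [hb]; rw [if_neg (by omega)]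
  have hblast : b (n'+1) = sInf D := by simp only [hb, if_pos rfl]
  have htb : ∀ k, k ≤ n' → t (b k) = v k := by
    intro k hk; rw [hbmid k hk]
    have := (hCmem k hk).2; simpa using this
  have hbIcc : ∀ k, k ≤ n' → b k ∈ Set.Icc ystar Y0 := by
    intro k hk; rw [hbmid k hk]; exact (hCmem k hk).1
  have hb0 : b 0 = ystar := by
    rw [hbmid 0 (by omega)]
    apply le_antisymm
    · apply csInf_le (hCbdd 0)
      exact ⟨⟨le_refl _, hyY⟩, by simp [hty, hv0]⟩
    · exact (hCmem 0 (by omega)).1.1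
  have hchain : ∀ k, k < n'+1 → b k < b (k+1) := by
    intro k hk
    rcases Nat.lt_or_ge k n' with hkn | hkn
    · have hk1 : k + 1 ≤ n' := hkn
      have hple : ystar ≤ b (k+1) := (hbIcc (k+1) hk1).1
      have hmem : v k ∈ Set.Icc (t (b (k+1))) (t ystar) := by
        rw [hty, htb (k+1) hk1]
        exact ⟨le_of_lt (hvmono k (k+1) (by omega) (by omega)), hvle2 k⟩
      obtain ⟨p, hp, hpt⟩ := intermediate_value_Icc' hple tc.continuousOn hmem
      have hpC : p ∈ C k := ⟨⟨hp.1, le_trans hp.2 (hbIcc (k+1) hk1).2⟩, by simp [hpt]⟩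
      have h1 : b k ≤ p := by rw [hbmid k (by omega)]; exact csInf_le (hCbdd k) hpC
      have h2 : b k ≠ b (k+1) := by
        intro h
        have h3 := htb k (by omega)
        rw [h, htb (k+1) hk1] at h3
        have h4 := hvmono k (k+1) (by omega) (by omega)
        rw [h3] at h4
        exact lt_irrefl _ h4
      exact lt_of_le_of_ne (le_trans h1 hp.2) h2
    · have hkeq : k = n' := by omega
      subst hkeq
      have h1 : sInf (C k) ≤ M := le_max_right _ _
      have h2 : M ≤ sInf D := hDmem.1.1
      have h3 : b k ≤ b (k+1) := by
        rw [hbmid k le_rfl, hblast]; linarith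
      apply lt_of_le_of_ne h3
      intro h
      have h4 := htb k le_rfl
      rw [h, hblast, htD] at h4
      have h5 := hvmono k (k+1) (by omega) le_rfl
      rw [hvlast] at h5; linarith
  have hblast2 : 2 < b (n'+1) := by
    rw [hblast]
    have h1 : 2 ≤ sInf D := le_trans (le_max_left _ _) hDmem.1.1
    apply lt_of_le_of_ne h1
    intro h
    rw [← h, ht2] at htD
    have : ystar = -2 := htD
    simp only [hystar] at this; linarith
  have hblasty : ystar < b (n'+1) := by
    have h1 := hchain n' (by omega)
    have h2 := (hbIcc n' le_rfl).1
    linarith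
  have hsigns : ∀ k, k ≤ n'+1 → 0 < (-1:ℝ)^k * f (b k) := by
    intro k hk
    rcases Nat.eq_or_lt_of_le hk with hkeq | hklt
    · subst hkeq
      have hmuge : 1 ≤ mu (b (n'+1)) := by
        rw [hmu]
        have hge2 : 2 ≤ b (n'+1) := le_of_lt hblast2
        have hA : 0 ≤ b (n'+1) + 2 - x₀^2 := by
          simp only [hystar] at hblasty; linarith
        have hB : 1 ≤ Snat (b (n'+1)) m' := (snat_mono hge2 m').1
        have hCge : Snat (b (n'+1)) m' ≤ Snat (b (n'+1)) (m'+1) := (snat_mono hge2 m').2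
        have hprod : 0 ≤ (b (n'+1) + 2 - x₀^2) * Snat (b (n'+1)) m'
            * (Snat (b (n'+1)) (m'+1) - Snat (b (n'+1)) m') :=
          mul_nonneg (mul_nonneg hA (by linarith)) (by linarith)
        linarith
      have htblast : t (b (n'+1)) = -2 := by rw [hblast]; exact htD
      have hfb : f (b (n'+1)) = (-1:ℝ)^(n'+1) * ((n':ℝ)+2)
          - mu (b (n'+1)) * ((-1:ℝ)^n' * ((n':ℝ)+1)) := by
        rw [hf, htblast, snat_neg_two, snat_neg_two]; push_cast; ring
      have hsq : ((-1:ℝ)^n') * ((-1:ℝ)^n') = 1 := by rw [← mul_pow]; norm_num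
      have expand : (-1:ℝ)^n' * -1 * ((-1:ℝ)^n' * -1 * ((n':ℝ)+2)
            - mu (b (n'+1)) * ((-1:ℝ)^n' * ((n':ℝ)+1)))
          = ((n':ℝ)+2) + mu (b (n'+1)) * ((n':ℝ)+1) := by
        linear_combination (((n':ℝ)+2) + mu (b (n'+1)) * ((n':ℝ)+1)) * hsq
      rw [hfb, pow_succ, expand]
      nlinarith [hmuge, mul_nonneg (by linarith : (0:ℝ) ≤ mu (b (n'+1)) - 1)
        (by positivity : (0:ℝ) ≤ (n':ℝ)+1)]
    · have hk' : k ≤ n' := by omega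
      rcases Nat.eq_zero_or_pos k with h0 | hpos
      · subst h0
        rw [hb0]
        have hone : f ystar = 1 := by
          rw [hf, hty, hmuy, snat_two, snat_two]; push_cast; ring
        rw [hone]; norm_num
      · obtain ⟨hz, ho⟩ := hsnat_v k hpos hk'
        have hfk : f (b k) = (-1:ℝ)^k := by
          rw [hf, htb k hk', hz, ho]; ring
        rw [hfk, ← mul_pow]; norm_num
  exact alt_roots f fc (n'+1) b hchain hsigns
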